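/- Any two proper 4-colorings of the triangulation T(3,3) are Kempe equivalent. -/

import Mathlib

/-- A proper `q`-coloring of a simple graph. -/
def IsProperColoring {V : Type*} (G : SimpleGraph V) {q : ℕ} (f : V → Fin q) : Prop :=
  ∀ ⦃u v : V⦄, G.Adj u v → f u ≠ f v

open Classical in
/-- A single Kempe change. -/
def KempeStep {V : Type*} (G : SimpleGraph V) {q : ℕ} (f g : V → Fin q) : Prop :=
  ∃ a b : Fin q, a ≠ b ∧
    ∃ C : (G.induce {v | f v = a ∨ f v = b}).ConnectedComponent,
      ∀ v : V,
        g v = if h : f v = a ∨ f v = b then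
                if (G.induce {v | f v = a ∨ f v = b}).connectedComponentMk ⟨v, h⟩ = C
                then Equiv.swap a b (f v) else f v
              else f v

/-- Kempe equivalence: a finite sequence of Kempe changes. -/
def KempeEquiv {V : Type*} (G : SimpleGraph V) {q : ℕ} (f g : V → Fin q) : Prop :=
  Relation.ReflTransGen (KempeStep G) f g

/-- The six neighbour displacement vectors of the triangular lattice. -/
def hexDirsM (r s : ℕ) : Set (ZMod r × ZMod s) :=
  {(1,0), (-1,0), (0,1), (0,-1), (1,1), (-1,-1)}

/-- The triangulation `T(r,s)` of the torus. -/
def TriRS (r s : ℕ) : SimpleGraph (ZMod r × ZMod s) where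
  Adj u v := u ≠ v ∧ v - u ∈ hexDirsM r s
  symm := by
    constructor
    rintro u v ⟨hne, hmem⟩
    refine ⟨hne.symm, ?_⟩
    rw [show u - v = -(v - u) from (neg_sub v u).symm]
    simp only [hexDirsM, Set.mem_insert_iff, Set.mem_singleton_iff] at hmem ⊢
    rcases hmem with h|h|h|h|h|h <;> rw [h] <;> simp [Prod.ext_iff]
  loopless := ⟨fun u h => h.1 rfl⟩

/-- The sign contribution of a face whose ordered vertex colors are `(a,b,c)`. -/
def faceSign (a b c : Fin 4) : ℤ :=
  if (a, b, c) = ((0 : Fin 4), (1 : Fin 4), (2 : Fin 4)) ∨ (a, b, c) = (1, 2, 0)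
      ∨ (a, b, c) = (2, 0, 1) then 1
  else if (a, b, c) = ((0 : Fin 4), (2 : Fin 4), (1 : Fin 4)) ∨ (a, b, c) = (2, 1, 0)
      ∨ (a, b, c) = (1, 0, 2) then -1
  else 0

/-- The degree of a 4-coloring of `T(r,s)`. -/
def degRS (r s : ℕ) (f : ZMod r × ZMod s → Fin 4) : ℤ :=
  ∑ i ∈ Finset.range r, ∑ j ∈ Finset.range s,
    (faceSign (f ((i : ZMod r), (j : ZMod s)))
              (f ((i : ZMod r) + 1, (j : ZMod s) + 1))
              (f ((i : ZMod r), (j : ZMod s) + 1))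
      + faceSign (f ((i : ZMod r), (j : ZMod s)))
                 (f ((i : ZMod r) + 1, (j : ZMod s)))
                 (f ((i : ZMod r) + 1, (j : ZMod s) + 1)))

abbrev pp (u : ZMod 3 × ZMod 3) : ZMod 3 := u.1 + u.2

lemma adj_iff (u v : ZMod 3 × ZMod 3) : (TriRS 3 3).Adj u v ↔ pp u ≠ pp v := by
  have key : ∀ u v : ZMod 3 × ZMod 3,
      (u ≠ v ∧ (v - u = (1,0) ∨ v - u = (-1,0) ∨ v - u = (0,1) ∨ v - u = (0,-1)
        ∨ v - u = (1,1) ∨ v - u = (-1,-1))) ↔ pp u ≠ pp v := by decide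
  rw [← key u v]
  show (u ≠ v ∧ v - u ∈ hexDirsM 3 3) ↔ _
  simp only [hexDirsM, Set.mem_insert_iff, Set.mem_singleton_iff]

/-- Recoloring a single vertex `v` to color `c`, when both `f v` and `c` are
confined to the part of `v`, is a Kempe step. -/
lemma kempeStep_update (f : ZMod 3 × ZMod 3 → Fin 4) (v : ZMod 3 × ZMod 3) (c : Fin 4)
    (hne : f v ≠ c) (H : ∀ u, f u = f v ∨ f u = c → pp u = pp v) :
    KempeStep (TriRS 3 3) f (Function.update f v c) := by
  set G := TriRS 3 3
  set S : Set (ZMod 3 × ZMod 3) := {u | f u = f v ∨ f u = c} with hS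
  have hvS : v ∈ S := Or.inl rfl
  -- the induced graph on S has no edges
  have noedge : ∀ x y : S, ¬ (G.induce S).Adj x y := by
    rintro x y hxy
    have hadj : G.Adj x.1 y.1 := hxy
    exact (adj_iff x.1 y.1).1 hadj (by rw [H x.1 x.2, H y.1 y.2])
  have reach_eq : ∀ x y : S, (G.induce S).Reachable x y → x = y := by
    rintro x y ⟨w⟩
    cases w with
    | nil => rfl
    | cons h _ => exact absurd h (noedge _ _)
  have mk_eq : ∀ (x y : S), ((G.induce S).connectedComponentMk x
      = (G.induce S).connectedComponentMk y) ↔ x = y := by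
    intro x y
    constructor
    · intro h
      exact reach_eq x y ((SimpleGraph.ConnectedComponent.eq).1 h)
    · rintro rfl; rfl
  refine ⟨f v, c, hne, (G.induce S).connectedComponentMk ⟨v, hvS⟩, fun u => ?_⟩
  by_cases h : f u = f v ∨ f u = c
  · rw [dif_pos h]
    by_cases huv : u = v
    · subst huv
      rw [if_pos (by rfl), Function.update_self, Equiv.swap_apply_left]
    · rw [if_neg (fun hh => huv (congrArg Subtype.val ((mk_eq _ _).1 hh))),
        Function.update_of_ne huv]
  · have huv : u ≠ v := fun hh => h (hh ▸ Or.inl rfl)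
    rw [dif_neg h, Function.update_of_ne huv]

/-- Recolor `v` to the color of `w` (same part): a Kempe equivalence. -/
lemma stepUpd (f : ZMod 3 × ZMod 3 → Fin 4)
    (hI : ∀ u w, f u = f w → pp u = pp w) (v w : ZMod 3 × ZMod 3) (hp : pp w = pp v) :
    KempeEquiv (TriRS 3 3) f (Function.update f v (f w)) := by
  by_cases h : f v = f w
  · rw [← h, Function.update_eq_self]
    exact Relation.ReflTransGen.refl
  · exact Relation.ReflTransGen.single (kempeStep_update f v (f w) h
      (fun u hu => by
        rcases hu with h1 | h1
        · exact hI u v h1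
        · exact (hI u w h1).trans hp))

lemma updInv (f : ZMod 3 × ZMod 3 → Fin 4)
    (hI : ∀ u w, f u = f w → pp u = pp w) (v w : ZMod 3 × ZMod 3) (hp : pp w = pp v) :
    ∀ u u', Function.update f v (f w) u = Function.update f v (f w) u' → pp u = pp u' := by
  intro u u' h
  by_cases hu : u = v <;> by_cases hu' : u' = v
  · rw [hu, hu']
  · rw [hu, Function.update_self, Function.update_of_ne hu'] at h
    rw [hu, ← hp]; exact hI w u' h
  · rw [hu', Function.update_of_ne hu, Function.update_self] at h
    rw [hu', ← hp]; exact hI u w h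
  · rw [Function.update_of_ne hu, Function.update_of_ne hu'] at h
    exact hI u u' h

lemma normalize' (f : ZMod 3 × ZMod 3 → Fin 4)
    (hI : ∀ u w, f u = f w → pp u = pp w) :
    KempeEquiv (TriRS 3 3) f (fun u => f (0, pp u)) := by
  have e1 := stepUpd f hI (1,2) (0,0) (by decide)
  have i1 := updInv f hI (1,2) (0,0) (by decide)
  set f1 := Function.update f (1,2) (f (0,0)) with hf1
  have e2 := stepUpd f1 i1 (2,1) (0,0) (by decide)
  have i2 := updInv f1 i1 (2,1) (0,0) (by decide)
  set f2 := Function.update f1 (2,1) (f1 (0,0)) with hf2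
  have e3 := stepUpd f2 i2 (1,0) (0,1) (by decide)
  have i3 := updInv f2 i2 (1,0) (0,1) (by decide)
  set f3 := Function.update f2 (1,0) (f2 (0,1)) with hf3
  have e4 := stepUpd f3 i3 (2,2) (0,1) (by decide)
  have i4 := updInv f3 i3 (2,2) (0,1) (by decide)
  set f4 := Function.update f3 (2,2) (f3 (0,1)) with hf4
  have e5 := stepUpd f4 i4 (2,0) (0,2) (by decide)
  have i5 := updInv f4 i4 (2,0) (0,2) (by decide)
  set f5 := Function.update f4 (2,0) (f4 (0,2)) with hf5
  have e6 := stepUpd f5 i5 (1,1) (0,2) (by decide)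
  set f6 := Function.update f5 (1,1) (f5 (0,2)) with hf6
  have hfin : f6 = fun u => f (0, pp u) := by
    funext u
    fin_cases u <;>
      simp +decide [hf6, hf5, hf4, hf3, hf2, hf1, Function.update_apply] <;> rfl
  have chain : KempeEquiv (TriRS 3 3) f f6 :=
    e1.trans (e2.trans (e3.trans (e4.trans (e5.trans e6))))
  exact hfin ▸ chain

lemma part_mem (k : ZMod 3) (u : ZMod 3 × ZMod 3) (hk : pp u = k) :
    u = ((0 : ZMod 3), k) ∨ u = ((1 : ZMod 3), k + 2) ∨ u = ((2 : ZMod 3), k + 1) := by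
  obtain ⟨x, y⟩ := u
  revert hk
  have h3 : ∀ x y kk : ZMod 3, x + y = kk →
      ((x, y) = ((0 : ZMod 3), kk) ∨ (x, y) = ((1 : ZMod 3), kk + 2)
        ∨ (x, y) = ((2 : ZMod 3), kk + 1)) := by decide
  exact h3 x y k

lemma sigma_move (σ : ZMod 3 → Fin 4) (hσ : Function.Injective σ) (k : ZMod 3)
    (w : Fin 4) (hw : ∀ k', σ k' ≠ w) :
    KempeEquiv (TriRS 3 3) (fun u => σ (pp u)) (fun u => Function.update σ k w (pp u)) := by
  set v1 : ZMod 3 × ZMod 3 := (0, k) with hv1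
  set v2 : ZMod 3 × ZMod 3 := (1, k + 2) with hv2
  set v3 : ZMod 3 × ZMod 3 := (2, k + 1) with hv3
  have hp1 : pp v1 = k := by show 0 + k = k; exact zero_add k
  have hp2 : pp v2 = k := by show 1 + (k + 2) = k; revert k; decide
  have hp3 : pp v3 = k := by show 2 + (k + 1) = k; revert k; decide
  have h12 : v1 ≠ v2 := by
    rw [hv1, hv2]; intro h; rw [Prod.mk.injEq] at h; exact absurd h.1 (by decide)
  have h13 : v1 ≠ v3 := by
    rw [hv1, hv3]; intro h; rw [Prod.mk.injEq] at h; exact absurd h.1 (by decide)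
  have h23 : v2 ≠ v3 := by
    rw [hv2, hv3]; intro h; rw [Prod.mk.injEq] at h; exact absurd h.1 (by decide)
  set f0 : ZMod 3 × ZMod 3 → Fin 4 := fun u => σ (pp u) with hf0
  have hf0u : ∀ u, f0 u = σ (pp u) := fun u => rfl
  -- step 1
  have hne1 : f0 v1 ≠ w := by rw [hf0u, hp1]; exact hw k
  have H1 : ∀ u, f0 u = f0 v1 ∨ f0 u = w → pp u = pp v1 := by
    intro u hu
    rcases hu with h | h
    · exact hσ h
    · exact absurd (hf0u u ▸ h) (hw _)
  have s1 := kempeStep_update f0 v1 w hne1 H1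
  set f1 := Function.update f0 v1 w with hf1
  -- step 2
  have hf1v2 : f1 v2 = σ k := by
    rw [hf1, Function.update_of_ne (fun h => h12 h.symm), hf0u, hp2]
  have hne2 : f1 v2 ≠ w := by rw [hf1v2]; exact hw k
  have H2 : ∀ u, f1 u = f1 v2 ∨ f1 u = w → pp u = pp v2 := by
    intro u hu
    rw [hp2]
    by_cases huv : u = v1
    · rw [huv, hp1]
    · rw [hf1v2, hf1, Function.update_of_ne huv, hf0u] at hu
      rcases hu with h | h
      · exact hσ h
      · exact absurd h (hw _)
  have s2 := kempeStep_update f1 v2 w hne2 H2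
  set f2 := Function.update f1 v2 w with hf2
  -- step 3
  have hf2v3 : f2 v3 = σ k := by
    rw [hf2, Function.update_of_ne (fun h => h23 h.symm), hf1,
      Function.update_of_ne (fun h => h13 h.symm), hf0u, hp3]
  have hne3 : f2 v3 ≠ w := by rw [hf2v3]; exact hw k
  have H3 : ∀ u, f2 u = f2 v3 ∨ f2 u = w → pp u = pp v3 := by
    intro u hu
    rw [hp3]
    by_cases huv1 : u = v1
    · rw [huv1, hp1]
    · by_cases huv2 : u = v2
      · rw [huv2, hp2]
      · rw [hf2v3, hf2, Function.update_of_ne huv2, hf1, Function.update_of_ne huv1,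
          hf0u] at hu
        rcases hu with h | h
        · exact hσ h
        · exact absurd h (hw _)
  have s3 := kempeStep_update f2 v3 w hne3 H3
  set f3 := Function.update f2 v3 w with hf3
  have hfin : f3 = fun u => Function.update σ k w (pp u) := by
    funext u
    by_cases hk : pp u = k
    · have hrhs : Function.update σ k w (pp u) = w := by rw [hk, Function.update_self]
      rw [hrhs]
      rcases part_mem k u hk with h | h | h
      · rw [show u = v1 from hv1 ▸ h, hf3, Function.update_of_ne h13,
          hf2, Function.update_of_ne h12, hf1, Function.update_self]
      · rw [show u = v2 from hv2 ▸ h, hf3, Function.update_of_ne h23,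
          hf2, Function.update_self]
      · rw [show u = v3 from hv3 ▸ h, hf3, Function.update_self]
    · have hu1 : u ≠ v1 := fun h => hk (by rw [h, hp1])
      have hu2 : u ≠ v2 := fun h => hk (by rw [h, hp2])
      have hu3 : u ≠ v3 := fun h => hk (by rw [h, hp3])
      rw [hf3, Function.update_of_ne hu3, hf2, Function.update_of_ne hu2, hf1,
        Function.update_of_ne hu1, hf0u, Function.update_of_ne hk]
  exact hfin ▸ Relation.ReflTransGen.head s1
    (Relation.ReflTransGen.head s2 (Relation.ReflTransGen.single s3))

def σabc (a b c : Fin 4) : ZMod 3 → Fin 4 :=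
  fun k => if k = 0 then a else if k = 1 then b else c

lemma upd0 (a b c w : Fin 4) : Function.update (σabc a b c) 0 w = σabc w b c := by
  funext k
  have hk : k = 0 ∨ k = 1 ∨ k = 2 := by revert k; decide
  rcases hk with rfl | rfl | rfl <;> simp +decide [σabc, Function.update_apply]

lemma upd1 (a b c w : Fin 4) : Function.update (σabc a b c) 1 w = σabc a w c := by
  funext k
  have hk : k = 0 ∨ k = 1 ∨ k = 2 := by revert k; decide
  rcases hk with rfl | rfl | rfl <;> simp +decide [σabc, Function.update_apply]

lemma upd2 (a b c w : Fin 4) : Function.update (σabc a b c) 2 w = σabc a b w := by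
  funext k
  have hk : k = 0 ∨ k = 1 ∨ k = 2 := by revert k; decide
  rcases hk with rfl | rfl | rfl <;> simp +decide [σabc, Function.update_apply]

lemma mv0 (a b c w : Fin 4) (hinj : Function.Injective (σabc a b c))
    (hw : ∀ k, σabc a b c k ≠ w) :
    KempeEquiv (TriRS 3 3) (fun u => σabc a b c (pp u)) (fun u => σabc w b c (pp u)) := by
  have := sigma_move (σabc a b c) hinj 0 w hw
  rwa [upd0] at this

lemma mv1 (a b c w : Fin 4) (hinj : Function.Injective (σabc a b c))
    (hw : ∀ k, σabc a b c k ≠ w) :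
    KempeEquiv (TriRS 3 3) (fun u => σabc a b c (pp u)) (fun u => σabc a w c (pp u)) := by
  have := sigma_move (σabc a b c) hinj 1 w hw
  rwa [upd1] at this

lemma mv2 (a b c w : Fin 4) (hinj : Function.Injective (σabc a b c))
    (hw : ∀ k, σabc a b c k ≠ w) :
    KempeEquiv (TriRS 3 3) (fun u => σabc a b c (pp u)) (fun u => σabc a b w (pp u)) := by
  have := sigma_move (σabc a b c) hinj 2 w hw
  rwa [upd2] at this

lemma tri (a b c : Fin 4) (h1 : a ≠ b) (h2 : a ≠ c) (h3 : b ≠ c) :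
    KempeEquiv (TriRS 3 3) (fun u => σabc a b c (pp u)) (fun u => σabc 0 1 2 (pp u)) := by
  have q4 : ∀ x : Fin 4, x = 0 ∨ x = 1 ∨ x = 2 ∨ x = 3 := by decide
  rcases q4 a with rfl | rfl | rfl | rfl <;> rcases q4 b with rfl | rfl | rfl | rfl <;>
      rcases q4 c with rfl | rfl | rfl | rfl <;>
    first
      | exact absurd rfl h1
      | exact absurd rfl h2
      | exact absurd rfl h3
      | skip
  · exact Relation.ReflTransGen.refl
  · exact (mv2 0 1 3 2 (by decide) (by decide))
  · exact ((mv1 0 2 1 3 (by decide) (by decide)).trans ((mv2 0 3 1 2 (by decide) (by decide)).trans (mv1 0 3 2 1 (by decide) (by decide))))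
  · exact ((mv1 0 2 3 1 (by decide) (by decide)).trans (mv2 0 1 3 2 (by decide) (by decide)))
  · exact ((mv2 0 3 1 2 (by decide) (by decide)).trans (mv1 0 3 2 1 (by decide) (by decide)))
  · exact (mv1 0 3 2 1 (by decide) (by decide))
  · exact ((mv0 1 0 2 3 (by decide) (by decide)).trans ((mv1 3 0 2 1 (by decide) (by decide)).trans (mv0 3 1 2 0 (by decide) (by decide))))
  · exact ((mv2 1 0 3 2 (by decide) (by decide)).trans ((mv0 1 0 2 3 (by decide) (by decide)).trans ((mv1 3 0 2 1 (by decide) (by decide)).trans (mv0 3 1 2 0 (by decide) (by decide)))))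
  · exact ((mv0 1 2 0 3 (by decide) (by decide)).trans ((mv1 3 2 0 1 (by decide) (by decide)).trans ((mv2 3 1 0 2 (by decide) (by decide)).trans (mv0 3 1 2 0 (by decide) (by decide)))))
  · exact ((mv0 1 2 3 0 (by decide) (by decide)).trans ((mv1 0 2 3 1 (by decide) (by decide)).trans (mv2 0 1 3 2 (by decide) (by decide))))
  · exact ((mv2 1 3 0 2 (by decide) (by decide)).trans ((mv0 1 3 2 0 (by decide) (by decide)).trans (mv1 0 3 2 1 (by decide) (by decide))))
  · exact ((mv0 1 3 2 0 (by decide) (by decide)).trans (mv1 0 3 2 1 (by decide) (by decide)))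
  · exact ((mv0 2 0 1 3 (by decide) (by decide)).trans ((mv2 3 0 1 2 (by decide) (by decide)).trans ((mv1 3 0 2 1 (by decide) (by decide)).trans (mv0 3 1 2 0 (by decide) (by decide)))))
  · exact ((mv1 2 0 3 1 (by decide) (by decide)).trans ((mv0 2 1 3 0 (by decide) (by decide)).trans (mv2 0 1 3 2 (by decide) (by decide))))
  · exact ((mv0 2 1 0 3 (by decide) (by decide)).trans ((mv2 3 1 0 2 (by decide) (by decide)).trans (mv0 3 1 2 0 (by decide) (by decide))))
  · exact ((mv0 2 1 3 0 (by decide) (by decide)).trans (mv2 0 1 3 2 (by decide) (by decide)))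
  · exact ((mv1 2 3 0 1 (by decide) (by decide)).trans ((mv0 2 1 0 3 (by decide) (by decide)).trans ((mv2 3 1 0 2 (by decide) (by decide)).trans (mv0 3 1 2 0 (by decide) (by decide)))))
  · exact ((mv0 2 3 1 0 (by decide) (by decide)).trans ((mv2 0 3 1 2 (by decide) (by decide)).trans (mv1 0 3 2 1 (by decide) (by decide))))
  · exact ((mv2 3 0 1 2 (by decide) (by decide)).trans ((mv1 3 0 2 1 (by decide) (by decide)).trans (mv0 3 1 2 0 (by decide) (by decide))))
  · exact ((mv1 3 0 2 1 (by decide) (by decide)).trans (mv0 3 1 2 0 (by decide) (by decide)))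
  · exact ((mv2 3 1 0 2 (by decide) (by decide)).trans (mv0 3 1 2 0 (by decide) (by decide)))
  · exact (mv0 3 1 2 0 (by decide) (by decide))
  · exact ((mv1 3 2 0 1 (by decide) (by decide)).trans ((mv2 3 1 0 2 (by decide) (by decide)).trans (mv0 3 1 2 0 (by decide) (by decide))))
  · exact ((mv1 3 2 1 0 (by decide) (by decide)).trans ((mv2 3 0 1 2 (by decide) (by decide)).trans ((mv1 3 0 2 1 (by decide) (by decide)).trans (mv0 3 1 2 0 (by decide) (by decide)))))

lemma kempeStep_symm {V : Type*} (G : SimpleGraph V) {q : ℕ} {f g : V → Fin q}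
    (h : KempeStep G f g) : KempeStep G g f := by
  obtain ⟨a, b, hab, C, hC⟩ := h
  have hiff : ∀ v, (g v = a ∨ g v = b) ↔ (f v = a ∨ f v = b) := by
    intro v
    have hgv := hC v
    by_cases h : f v = a ∨ f v = b
    · rw [dif_pos h] at hgv
      refine ⟨fun _ => h, fun _ => ?_⟩
      by_cases hc : (G.induce {v | f v = a ∨ f v = b}).connectedComponentMk ⟨v, h⟩ = C
      · rw [if_pos hc] at hgv
        rcases h with h' | h'
        · rw [hgv, h', Equiv.swap_apply_left]; exact Or.inr rfl
        · rw [hgv, h', Equiv.swap_apply_right]; exact Or.inl rfl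
      · rw [if_neg hc] at hgv; rw [hgv]; exact h
    · rw [dif_neg h] at hgv
      rw [hgv]
  -- graph homs between the two induced graphs
  let φ : G.induce {v | g v = a ∨ g v = b} →g G.induce {v | f v = a ∨ f v = b} :=
    ⟨fun x => ⟨x.1, (hiff x.1).1 x.2⟩, fun {x y} hxy => hxy⟩
  let ψ : G.induce {v | f v = a ∨ f v = b} →g G.induce {v | g v = a ∨ g v = b} :=
    ⟨fun x => ⟨x.1, (hiff x.1).2 x.2⟩, fun {x y} hxy => hxy⟩
  refine ⟨a, b, hab, C.map ψ, fun v => ?_⟩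
  have hgv := hC v
  by_cases h : f v = a ∨ f v = b
  · have hg : g v = a ∨ g v = b := (hiff v).2 h
    rw [dif_pos h] at hgv
    rw [dif_pos hg]
    have hkey : ((G.induce {v | g v = a ∨ g v = b}).connectedComponentMk ⟨v, hg⟩ = C.map ψ)
        ↔ ((G.induce {v | f v = a ∨ f v = b}).connectedComponentMk ⟨v, h⟩ = C) := by
      induction C using SimpleGraph.ConnectedComponent.ind with
      | _ x =>
        rw [SimpleGraph.ConnectedComponent.map_mk]
        rw [SimpleGraph.ConnectedComponent.eq, SimpleGraph.ConnectedComponent.eq]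
        constructor
        · intro r
          have := r.map φ
          have e1 : φ ⟨v, hg⟩ = ⟨v, h⟩ := rfl
          have e2 : φ (ψ x) = x := rfl
          rwa [e1, e2] at this
        · intro r
          exact r.map ψ
    by_cases hc : (G.induce {v | f v = a ∨ f v = b}).connectedComponentMk ⟨v, h⟩ = C
    · rw [if_pos hc] at hgv
      rw [if_pos (hkey.2 hc), hgv, Equiv.swap_apply_self]
    · rw [if_neg hc] at hgv
      rw [if_neg (fun hh => hc (hkey.1 hh)), hgv]
  · have hg : ¬(g v = a ∨ g v = b) := fun hh => h ((hiff v).1 hh)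
    rw [dif_neg h] at hgv
    rw [dif_neg hg, hgv]

lemma kempeEquiv_symm {V : Type*} (G : SimpleGraph V) {q : ℕ} {f g : V → Fin q}
    (h : KempeEquiv G f g) : KempeEquiv G g f := by
  induction h with
  | refl => exact Relation.ReflTransGen.refl
  | tail _ step ih => exact Relation.ReflTransGen.head (kempeStep_symm G step) ih

/-- Any two proper 4-colorings of the triangulation T(3,3) are Kempe
equivalent. -/
theorem T33_kempe (f g : ZMod 3 × ZMod 3 → Fin 4)
    (hf : IsProperColoring (TriRS 3 3) f) (hg : IsProperColoring (TriRS 3 3) g) :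
    KempeEquiv (TriRS 3 3) f g := by
  have z3 : ∀ x : ZMod 3, x = 0 ∨ x = 1 ∨ x = 2 := by decide
  have key : ∀ h : ZMod 3 × ZMod 3 → Fin 4, IsProperColoring (TriRS 3 3) h →
      KempeEquiv (TriRS 3 3) h (fun u => σabc 0 1 2 (pp u)) := by
    intro h hp
    have hI : ∀ u w, h u = h w → pp u = pp w := by
      intro u w huw
      by_contra hne
      exact hp ((adj_iff u w).2 hne) huw
    have e1 := normalize' h hI
    have heq : (fun u => h (0, pp u))
        = fun u => σabc (h (0, 0)) (h (0, 1)) (h (0, 2)) (pp u) := by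
      funext u
      rcases z3 (pp u) with h0 | h0 | h0 <;> rw [h0] <;> simp +decide [σabc]
    have d01 : h (0, 0) ≠ h (0, 1) := hp ((adj_iff _ _).2 (by decide))
    have d02 : h (0, 0) ≠ h (0, 2) := hp ((adj_iff _ _).2 (by decide))
    have d12 : h (0, 1) ≠ h (0, 2) := hp ((adj_iff _ _).2 (by decide))
    exact e1.trans (heq ▸ tri (h (0, 0)) (h (0, 1)) (h (0, 2)) d01 d02 d12)
  exact (key f hf).trans (kempeEquiv_symm _ (key g hg))
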